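/- Let G be a unimodular locally compact group with left Haar measure. For any u ∈ L²(G) and any compactly supported continuous function v on G, the function g ↦ ⟨λ(g)u, v⟩_{L²(G)} (where λ(g)u(x) = u(g⁻¹x) is the left regular representation) is square integrable on G, with ∫_G |⟨λ(g)u, v⟩|² dg ≤ ‖u‖²_{L²} · ‖v‖²_{L¹}. -/

import Mathlib

open MeasureTheory ComplexConjugate

open Set Function Filter ENNReal
open scoped Pointwise

private lemma aux_list_prod_mem_pow {G : Type*} [Group G] {T : Set G} :
    ∀ (l : List G), (∀ y ∈ l, y ∈ T) → l.prod ∈ T ^ l.length := by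
  intro l
  induction l with
  | nil => intro _; simp [Set.mem_one]
  | cons a l ih =>
      intro h
      rw [List.prod_cons, List.length_cons, pow_succ']
      exact Set.mul_mem_mul (h a (List.Mem.head l)) (ih fun y hy => h y (List.Mem.tail a hy))

private lemma aux_subgroup_subset {G : Type*} [Group G] (S : Set G) :
    (Subgroup.closure S : Set G) ⊆ ⋃ n : ℕ, (S ∪ S⁻¹) ^ n := by
  intro x hx
  have hx' : x ∈ (Subgroup.closure S).toSubmonoid := hx
  rw [Subgroup.closure_toSubmonoid] at hx'
  obtain ⟨l, hl, hlp⟩ := Submonoid.exists_list_of_mem_closure hx'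
  exact Set.mem_iUnion.mpr ⟨l.length, hlp ▸ aux_list_prod_mem_pow l hl⟩

/-- Per-piece result: on a finite measure piece `s` contained in a compact set, we have
(1) a strongly measurable representative of the parametric integral,
(2) measurability of the set-lintegral in the second variable,
(3) a Tonelli swap. -/
private lemma aux_piece {G : Type*} [Group G] [TopologicalSpace G] [IsTopologicalGroup G]
    [LocallyCompactSpace G] [MeasurableSpace G] [BorelSpace G]
    (μ ν : Measure G) [SFinite ν]
    {v : G → ℂ} (hv : Continuous v) (hvc : HasCompactSupport v)
    {u' : G → ℂ} (hu' : StronglyMeasurable u')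
    {s : Set G} (hs : MeasurableSet s) (hsfin : μ s ≠ ⊤)
    {C : Set G} (hC : IsCompact C) (hsC : s ⊆ C) :
    (∃ gm : G → ℂ, StronglyMeasurable gm ∧
        ∀ g ∈ s, gm g = ∫ y, u' y * (starRingEnd ℂ) (v (g * y)) ∂ν) ∧
    Measurable (fun y => ∫⁻ g in s, (‖v (g * y)‖₊ : ℝ≥0∞) ∂μ) ∧
    ∫⁻ g in s, (∫⁻ y, (‖u' y‖₊ : ℝ≥0∞) ^ 2 * ‖v (g * y)‖₊ ∂ν) ∂μ
      = ∫⁻ y, (‖u' y‖₊ : ℝ≥0∞) ^ 2 * (∫⁻ g in s, (‖v (g * y)‖₊ : ℝ≥0∞) ∂μ) ∂ν := by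
  obtain ⟨M, hMc, hMsub⟩ := exists_compact_superset hC
  obtain ⟨χ, hχ1, hχ0, hχc, hχrange⟩ :=
    exists_continuous_one_zero_of_isCompact hC isOpen_interior.isClosed_compl
      (disjoint_compl_right_iff_subset.mpr hMsub)
  set K := tsupport v with hK_def
  have hK : IsCompact K := hvc
  set A := tsupport (⇑χ) with hA_def
  have hA : IsCompact A := hχc
  -- the cutoff kernel
  set σ : G × G → ℂ := fun p => (χ p.1 : ℂ) * v (p.1 * p.2) with hσ_def
  have hσc : Continuous σ :=
    ((Complex.continuous_ofReal.comp χ.continuous).comp continuous_fst).mul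
      (hv.comp (continuous_fst.mul continuous_snd))
  have hσsupp : Function.support σ ⊆ A ×ˢ (A⁻¹ * K) := by
    intro p hp
    have h1 : (χ p.1 : ℂ) ≠ 0 := left_ne_zero_of_mul hp
    have h2 : v (p.1 * p.2) ≠ 0 := right_ne_zero_of_mul hp
    have hp1 : p.1 ∈ A := subset_tsupport _ (by simpa using h1)
    have hp2 : p.1 * p.2 ∈ K := subset_tsupport _ h2
    refine ⟨hp1, ?_⟩
    have : p.2 = p.1⁻¹ * (p.1 * p.2) := by group
    rw [this]
    exact Set.mul_mem_mul (Set.inv_mem_inv.mpr hp1) hp2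
  have hσcs : HasCompactSupport σ := by
    refine HasCompactSupport.intro (K := closure (A ×ˢ (A⁻¹ * K)))
      ((hA.prod ((hA.inv).mul hK)).closure) ?_
    intro p hp
    by_contra hne
    exact hp (subset_closure (hσsupp hne))
  have hσsm : StronglyMeasurable σ := hσcs.stronglyMeasurable_of_prod hσc
  haveI : IsFiniteMeasure (μ.restrict s) :=
    ⟨by rw [Measure.restrict_apply_univ]; exact lt_top_iff_ne_top.mpr hsfin⟩
  have hχs : ∀ g ∈ s, χ g = 1 := fun g hg => hχ1 (hsC hg)
  refine ⟨?_, ?_, ?_⟩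
  · -- strongly measurable representative
    set Λ : G × G → ℂ := fun p => u' p.2 * star (σ p) with hΛ_def
    have hΛsm : StronglyMeasurable Λ :=
      (hu'.comp_measurable measurable_snd).mul (continuous_star.comp_stronglyMeasurable hσsm)
    refine ⟨fun g => ∫ y, Λ (g, y) ∂ν, hΛsm.integral_prod_right', ?_⟩
    intro g hg
    refine integral_congr_ae (Filter.Eventually.of_forall fun y => ?_)
    simp only [hΛ_def, hσ_def, hχs g hg, Complex.ofReal_one, one_mul, starRingEnd_apply]
  · -- measurability in y
    have hΘm : Measurable fun p : G × G => (‖σ p‖₊ : ℝ≥0∞) :=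
      hσsm.measurable.nnnorm.coe_nnreal_ennreal
    have he : (fun y => ∫⁻ g in s, (‖v (g * y)‖₊ : ℝ≥0∞) ∂μ)
        = fun y => ∫⁻ g, (‖σ (g, y)‖₊ : ℝ≥0∞) ∂(μ.restrict s) := by
      funext y
      refine setLIntegral_congr_fun hs (fun g hg => ?_)
      simp [hσ_def, hχs g hg]
    rw [he]
    exact hΘm.lintegral_prod_left'
  · -- the swap
    have hΘ'm : Measurable fun p : G × G => (‖u' p.2‖₊ : ℝ≥0∞) ^ 2 * (‖σ p‖₊ : ℝ≥0∞) :=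
      ((hu'.measurable.nnnorm.coe_nnreal_ennreal.comp measurable_snd).pow_const 2).mul
        hσsm.measurable.nnnorm.coe_nnreal_ennreal
    have hnull : ((μ.restrict s).prod ν) (sᶜ ×ˢ (univ : Set G)) = 0 := by
      rw [Measure.prod_prod, Measure.restrict_apply hs.compl, Set.compl_inter_self,
        measure_empty, zero_mul]
    have hae : (fun p : G × G => (‖u' p.2‖₊ : ℝ≥0∞) ^ 2 * (‖σ p‖₊ : ℝ≥0∞))
        =ᵐ[(μ.restrict s).prod ν]
        (uncurry fun g y => (‖u' y‖₊ : ℝ≥0∞) ^ 2 * (‖v (g * y)‖₊ : ℝ≥0∞)) := by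
      refine ae_iff.mpr (measure_mono_null ?_ hnull)
      intro p hp
      simp only [Set.mem_setOf_eq] at hp
      constructor
      · by_contra hps
        simp only [Set.mem_compl_iff, not_not] at hps
        exact hp (by simp [uncurry, hσ_def, hχs p.1 hps])
      · trivial
    have hΦae : AEMeasurable
        (uncurry fun g y => (‖u' y‖₊ : ℝ≥0∞) ^ 2 * (‖v (g * y)‖₊ : ℝ≥0∞))
        ((μ.restrict s).prod ν) := hΘ'm.aemeasurable.congr hae
    have hswap := lintegral_lintegral_swap hΦae
    calc ∫⁻ g in s, (∫⁻ y, (‖u' y‖₊ : ℝ≥0∞) ^ 2 * ‖v (g * y)‖₊ ∂ν) ∂μ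
        = ∫⁻ y, ∫⁻ g in s, (‖u' y‖₊ : ℝ≥0∞) ^ 2 * ‖v (g * y)‖₊ ∂μ ∂ν := hswap
      _ = ∫⁻ y, (‖u' y‖₊ : ℝ≥0∞) ^ 2 * (∫⁻ g in s, (‖v (g * y)‖₊ : ℝ≥0∞) ∂μ) ∂ν := by
          refine lintegral_congr fun y => ?_
          exact lintegral_const_mul' _ _ (ENNReal.pow_ne_top ENNReal.coe_ne_top)

theorem stmt0 {G : Type*} [Group G] [TopologicalSpace G] [IsTopologicalGroup G]
    [LocallyCompactSpace G] [MeasurableSpace G] [BorelSpace G]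
    (μ : Measure G) [μ.IsHaarMeasure] [μ.IsMulRightInvariant]
    (u v : G → ℂ) (hu : MemLp u 2 μ) (hv : Continuous v) (hvc : HasCompactSupport v) :
    MemLp (fun g : G => ∫ x, u (g⁻¹ * x) * conj (v x) ∂μ) 2 μ ∧
    ∫ g, ‖∫ x, u (g⁻¹ * x) * conj (v x) ∂μ‖ ^ 2 ∂μ ≤
      (eLpNorm u 2 μ).toReal ^ 2 * (eLpNorm v 1 μ).toReal ^ 2 := by
  classical
  -- measurable representative of u and its σ-finite carrier set
  set u' : G → ℂ := hu.aestronglyMeasurable.mk u with hu'_def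
  have hu'sm : StronglyMeasurable u' := hu.aestronglyMeasurable.stronglyMeasurable_mk
  have huu' : u =ᵐ[μ] u' := hu.aestronglyMeasurable.ae_eq_mk
  have hu'mem : MemLp u' 2 μ := (memLp_congr_ae huu').mp hu
  obtain ⟨t, htm, ht0, htsf⟩ :=
    (hu'mem.finStronglyMeasurable_of_stronglyMeasurable hu'sm two_ne_zero
      ENNReal.ofNat_ne_top).exists_set_sigmaFinite
  haveI : SigmaFinite (μ.restrict t) := htsf
  -- notation
  set F : G → ℂ := fun g : G => ∫ x, u (g⁻¹ * x) * conj (v x) ∂μ with hF_def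
  set f : G → ℝ≥0∞ := fun y => (‖u' y‖₊ : ℝ≥0∞) with hf_def
  set h : G → ℝ≥0∞ := fun x => (‖v x‖₊ : ℝ≥0∞) with hh_def
  have hfm : Measurable f := hu'sm.measurable.nnnorm.coe_nnreal_ennreal
  have hhm : Measurable h := hv.measurable.nnnorm.coe_nnreal_ennreal
  have hf0 : ∀ y ∉ t, f y = 0 := by
    intro y hy; simp [hf_def, ht0 y hy]
  set Nv : ℝ≥0∞ := ∫⁻ x, h x ∂μ with hNv_def
  set Nu2 : ℝ≥0∞ := ∫⁻ y, f y ^ 2 ∂μ with hNu2_def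
  have hNvne : Nv ≠ ⊤ := by
    have : Integrable v μ := hv.integrable_of_hasCompactSupport hvc
    exact this.2.ne
  have hNveq : Nv = eLpNorm v 1 μ := (eLpNorm_one_eq_lintegral_enorm (f := v) (μ := μ)).symm
  have hNu2eq : Nu2 = eLpNorm u 2 μ ^ 2 := by
    rw [eLpNorm_congr_ae huu', eLpNorm_eq_lintegral_rpow_enorm_toReal two_ne_zero ENNReal.ofNat_ne_top]
    rw [← ENNReal.rpow_natCast _ 2, ← ENNReal.rpow_mul]
    norm_num
    rfl
  have hNu2ne : Nu2 ≠ ⊤ := by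
    rw [hNu2eq]; exact ENNReal.pow_ne_top hu.2.ne
  -- pointwise representation of F
  have hFrep : ∀ g : G, F g = ∫ y, u' y * conj (v (g * y)) ∂(μ.restrict t) := by
    intro g
    have hqmp := (measurePreserving_mul_left μ g⁻¹).quasiMeasurePreserving
    have hae : (fun x => u (g⁻¹ * x)) =ᵐ[μ] fun x => u' (g⁻¹ * x) := hqmp.ae_eq_comp huu'
    have e1 : F g = ∫ x, u' (g⁻¹ * x) * conj (v x) ∂μ := by
      refine integral_congr_ae ?_
      filter_upwards [hae] with x hx
      rw [hx]
    have e2 : ∫ x, u' (g⁻¹ * x) * conj (v x) ∂μ = ∫ y, u' y * conj (v (g * y)) ∂μ := by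
      have := (measurePreserving_mul_left μ g).integral_comp
        (MeasurableEquiv.mulLeft g).measurableEmbedding
        (fun x => u' (g⁻¹ * x) * conj (v x))
      simp only [MeasurableEquiv.coe_mulLeft, inv_mul_cancel_left] at this
      exact this.symm
    have e3 : ∫ y, u' y * conj (v (g * y)) ∂(μ.restrict t)
        = ∫ y, u' y * conj (v (g * y)) ∂μ := by
      refine setIntegral_eq_integral_of_forall_compl_eq_zero fun y hy => ?_
      rw [ht0 y hy, zero_mul]
    rw [e1, e2, ← e3]
  -- definition of J
  set J : G → ℝ≥0∞ := fun g => ∫⁻ y, f y ^ 2 * h (g * y) ∂(μ.restrict t) with hJ_def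
  -- pointwise bound : ‖F g‖² ≤ J g * Nv
  have hpoint : ∀ g : G, (‖F g‖₊ : ℝ≥0∞) ^ 2 ≤ J g * Nv := by
    intro g
    set b : G → ℝ≥0∞ := fun y => h (g * y) with hb_def
    have hbm : Measurable b := hhm.comp (measurable_const_mul g)
    have hbint : ∫⁻ y, b y ∂μ = Nv := lintegral_mul_left_eq_self h g
    -- step 1 : ‖F g‖ ≤ ∫⁻ f * b
    have e1 : (‖F g‖₊ : ℝ≥0∞) ≤ ∫⁻ y, f y * b y ∂μ := by
      have i1 : (‖F g‖₊ : ℝ≥0∞) ≤ ∫⁻ x, ‖u (g⁻¹ * x) * conj (v x)‖₊ ∂μ :=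
        enorm_integral_le_lintegral_enorm _
      have i2 : ∫⁻ x, (‖u (g⁻¹ * x) * conj (v x)‖₊ : ℝ≥0∞) ∂μ
          = ∫⁻ x, (‖u' (g⁻¹ * x)‖₊ : ℝ≥0∞) * h x ∂μ := by
        have hqmp := (measurePreserving_mul_left μ g⁻¹).quasiMeasurePreserving
        have hae : (fun x => u (g⁻¹ * x)) =ᵐ[μ] fun x => u' (g⁻¹ * x) := hqmp.ae_eq_comp huu'
        refine lintegral_congr_ae ?_
        filter_upwards [hae] with x hx
        rw [nnnorm_mul, ENNReal.coe_mul, hx, RCLike.nnnorm_conj]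
      have i3 : ∫⁻ x, (‖u' (g⁻¹ * x)‖₊ : ℝ≥0∞) * h x ∂μ = ∫⁻ y, f y * b y ∂μ := by
        have := lintegral_mul_left_eq_self (μ := μ) (fun x => (‖u' (g⁻¹ * x)‖₊ : ℝ≥0∞) * h x) g
        simp only [inv_mul_cancel_left] at this
        exact this.symm
      calc (‖F g‖₊ : ℝ≥0∞) ≤ _ := i1
        _ = _ := i2
        _ = _ := i3
    -- step 2 : Cauchy-Schwarz
    have e2 : ∫⁻ y, f y * b y ∂μ
        ≤ (∫⁻ y, f y ^ 2 * b y ∂μ) ^ (1/2 : ℝ) * Nv ^ (1/2 : ℝ) := by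
      have h22 : Real.HolderConjugate 2 2 := Real.holderConjugate_iff.mpr ⟨one_lt_two, by norm_num⟩
      have hφ : AEMeasurable (fun y => f y * b y ^ (1/2 : ℝ)) μ :=
        (hfm.mul (hbm.pow_const _)).aemeasurable
      have hψ : AEMeasurable (fun y => b y ^ (1/2 : ℝ)) μ := (hbm.pow_const _).aemeasurable
      have key := ENNReal.lintegral_mul_le_Lp_mul_Lq μ h22 hφ hψ
      have k1 : ∫⁻ y, ((fun y => f y * b y ^ (1/2 : ℝ)) * fun y => b y ^ (1/2 : ℝ)) y ∂μ
          = ∫⁻ y, f y * b y ∂μ := by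
        refine lintegral_congr fun y => ?_
        simp only [Pi.mul_apply]
        rw [mul_assoc, ← ENNReal.rpow_add_of_nonneg _ _ (by norm_num) (by norm_num)]
        norm_num
      have k2 : ∫⁻ y, (f y * b y ^ (1/2 : ℝ)) ^ (2 : ℝ) ∂μ = ∫⁻ y, f y ^ 2 * b y ∂μ := by
        refine lintegral_congr fun y => ?_
        rw [ENNReal.mul_rpow_of_nonneg _ _ (by norm_num : (0:ℝ) ≤ 2), ← ENNReal.rpow_mul]
        norm_num
      have k3 : ∫⁻ y, (b y ^ (1/2 : ℝ)) ^ (2 : ℝ) ∂μ = Nv := by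
        rw [← hbint]
        refine lintegral_congr fun y => ?_
        rw [← ENNReal.rpow_mul]
        norm_num
      rw [k1, k2, k3] at key
      simpa using key
    -- step 3 : relate to J
    have e4 : ∫⁻ y, f y ^ 2 * b y ∂μ = J g := by
      have : (fun y => f y ^ 2 * b y) = t.indicator fun y => f y ^ 2 * b y := by
        funext y
        by_cases hy : y ∈ t
        · rw [Set.indicator_of_mem hy]
        · rw [Set.indicator_of_notMem hy, hf0 y hy]
          simp
      rw [this, lintegral_indicator htm]
    calc (‖F g‖₊ : ℝ≥0∞) ^ 2 ≤ (∫⁻ y, f y * b y ∂μ) ^ 2 := by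
            exact pow_le_pow_left' e1 2
      _ ≤ ((∫⁻ y, f y ^ 2 * b y ∂μ) ^ (1/2 : ℝ) * Nv ^ (1/2 : ℝ)) ^ 2 := pow_le_pow_left' e2 2
      _ = (∫⁻ y, f y ^ 2 * b y ∂μ) * Nv := by
            rw [mul_pow, ← ENNReal.rpow_natCast (_ ^ (1/2:ℝ)) 2, ← ENNReal.rpow_natCast (Nv ^ (1/2:ℝ)) 2,
              ← ENNReal.rpow_mul, ← ENNReal.rpow_mul]
            norm_num
      _ = J g * Nv := by rw [e4]
  -- the coset machinery
  obtain ⟨U, hUc, hU1⟩ := exists_compact_mem_nhds (1 : G)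
  set K : Set G := tsupport v with hK_def
  have hKc : IsCompact K := hvc
  set S : Set G := U ∪ K with hS_def
  set T : Set G := S ∪ S⁻¹ with hT_def
  have hTc : IsCompact T := (hUc.union hKc).union (hUc.union hKc).inv
  have hTpowc : ∀ n : ℕ, IsCompact (T ^ n) := by
    intro n
    induction n with
    | zero => rw [pow_zero]; exact (show (1 : Set G) = {1} from rfl) ▸ isCompact_singleton
    | succ n ih => rw [pow_succ]; exact ih.mul hTc
  set H : Subgroup G := Subgroup.closure S with hH_def
  have hHsub : (H : Set G) ⊆ ⋃ n : ℕ, T ^ n := aux_subgroup_subset S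
  have hHo : IsOpen (H : Set G) :=
    H.isOpen_of_mem_nhds (Filter.mem_of_superset hU1
      (fun x hx => Subgroup.subset_closure (Or.inl hx)))
  have hKH : K ⊆ (H : Set G) := fun x hx => Subgroup.subset_closure (Or.inr hx)
  have hcosetOpen : ∀ q : G ⧸ H, IsOpen (QuotientGroup.mk ⁻¹' {q} : Set G) := by
    intro q
    induction q using QuotientGroup.induction_on with
    | H c =>
      have : (QuotientGroup.mk ⁻¹' {(QuotientGroup.mk c : G ⧸ H)} : Set G)
          = (fun g => c⁻¹ * g) ⁻¹' (H : Set G) := by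
        ext g
        simp only [Set.mem_preimage, Set.mem_singleton_iff, SetLike.mem_coe]
        rw [eq_comm]
        exact QuotientGroup.eq
      rw [this]
      exact hHo.preimage (continuous_const.mul continuous_id)
  -- vanishing off bad cosets
  have hker : ∀ g : G, {y : G | u' y ≠ 0 ∧ v (g * y) ≠ 0}
      ⊆ QuotientGroup.mk ⁻¹' {(QuotientGroup.mk g⁻¹ : G ⧸ H)} := by
    intro g y hy
    have hgy : g * y ∈ (H : Set G) := hKH (subset_tsupport _ hy.2)
    have : y⁻¹ * g⁻¹ ∈ H := by
      have := H.inv_mem hgy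
      rwa [mul_inv_rev] at this
    simp only [Set.mem_preimage, Set.mem_singleton_iff]
    exact QuotientGroup.eq.mpr this
  have hvan : ∀ g : G,
      (μ.restrict t) (QuotientGroup.mk ⁻¹' {(QuotientGroup.mk g⁻¹ : G ⧸ H)}) = 0 →
      J g = 0 ∧ F g = 0 := by
    intro g h0
    have hae : ∀ᵐ y ∂(μ.restrict t), y ∉ {y : G | u' y ≠ 0 ∧ v (g * y) ≠ 0} :=
      measure_eq_zero_iff_ae_notMem.mp (measure_mono_null (hker g) h0)
    constructor
    · rw [hJ_def]
      rw [← lintegral_zero (μ := μ.restrict t)]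
      refine lintegral_congr_ae ?_
      filter_upwards [hae] with y hy
      simp only [Set.mem_setOf_eq, not_and_or, not_not] at hy
      rcases hy with hy | hy
      · simp [hf_def, hy]
      · simp [hh_def, hy]
    · rw [hFrep g]
      refine integral_eq_zero_of_ae ?_
      filter_upwards [hae] with y hy
      simp only [Set.mem_setOf_eq, not_and_or, not_not] at hy
      rcases hy with hy | hy
      · simp [hy]
      · simp [hy]
  -- the countable family of cosets
  set Qset : Set (G ⧸ H) :=
    {q | 0 < (μ.restrict t) (QuotientGroup.mk ⁻¹' {q})} with hQ_def
  have hQc : Qset.Countable := by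
    refine Measure.countable_meas_pos_of_disjoint_iUnion₀
      (As := fun q : G ⧸ H => QuotientGroup.mk ⁻¹' {q}) ?_ ?_
    · exact fun q => ((hcosetOpen q).measurableSet).nullMeasurableSet
    · intro q q' hqq'
      refine Disjoint.aedisjoint (Set.disjoint_left.mpr ?_)
      intro g hg hg'
      exact hqq' (by
        rw [Set.mem_preimage, Set.mem_singleton_iff] at hg hg'
        rw [← hg, ← hg'])
  rcases Set.eq_empty_or_nonempty Qset with hQE | hQN
  · -- degenerate case : everything vanishes
    have hzero : ∀ g : G, J g = 0 ∧ F g = 0 := by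
      intro g
      refine hvan g ?_
      by_contra h0
      have : (QuotientGroup.mk g⁻¹ : G ⧸ H) ∈ Qset := pos_iff_ne_zero.mpr h0
      rw [hQE] at this
      exact this
    have hFzero : F = fun _ => (0 : ℂ) := funext fun g => (hzero g).2
    constructor
    · rw [hFzero]
      exact MemLp.zero
    · show ∫ g, ‖F g‖ ^ 2 ∂μ ≤ _
      have hzz : (fun g : G => ‖F g‖ ^ 2) = fun _ => (0:ℝ) := by
        funext g
        rw [(hzero g).2]
        simp
      rw [hzz]
      simp only [integral_zero]
      positivity
  · -- main case
    obtain ⟨e0, he0⟩ := Set.Countable.exists_surjective hQN hQc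
    set Bfun : ↥Qset × ℕ → Set G :=
      fun p => closure ((T ^ p.2) * ({(Quotient.out ((p.1 : G ⧸ H)))⁻¹} : Set G)) with hB_def
    have hBc : ∀ p, IsCompact (Bfun p) := by
      intro p
      exact ((hTpowc p.2).mul isCompact_singleton).closure
    have hBm : ∀ p, MeasurableSet (Bfun p) := fun p => isClosed_closure.measurableSet
    have hBfin : ∀ p, μ (Bfun p) ≠ ⊤ := fun p => (hBc p).measure_lt_top.ne
    set idx : ℕ → ↥Qset × ℕ := fun n => (e0 (Nat.pairEquiv.symm n).1, (Nat.pairEquiv.symm n).2)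
      with hidx_def
    have hidx : Surjective idx := by
      intro ⟨q, m⟩
      obtain ⟨n0, hn0⟩ := he0 q
      exact ⟨Nat.pairEquiv (n0, m), by simp [hidx_def, hn0]⟩
    set W : Set G := ⋃ n : ℕ, Bfun (idx n) with hW_def
    have hWm : MeasurableSet W := MeasurableSet.iUnion fun n => hBm _
    have hWU : W = ⋃ p : ↥Qset × ℕ, Bfun p := hidx.iUnion_comp Bfun
    -- covering property
    have hcov : ∀ g : G, g ∉ W → J g = 0 ∧ F g = 0 := by
      intro g hgW
      refine hvan g ?_
      by_contra h0
      have hq : (QuotientGroup.mk g⁻¹ : G ⧸ H) ∈ Qset := pos_iff_ne_zero.mpr h0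
      set c : G := Quotient.out (QuotientGroup.mk g⁻¹ : G ⧸ H) with hc_def
      have hcq : (QuotientGroup.mk c : G ⧸ H) = QuotientGroup.mk g⁻¹ := by
        rw [hc_def]; exact Quotient.out_eq _
      have hgc : g * c ∈ H := by
        have := QuotientGroup.eq.mp hcq.symm
        rwa [inv_inv] at this
      obtain ⟨_, ⟨m, rfl⟩, hmT⟩ := hHsub hgc
      apply hgW
      obtain ⟨n, hn⟩ := hidx (⟨_, hq⟩, m)
      refine Set.mem_iUnion.mpr ⟨n, ?_⟩
      rw [hn]
      refine subset_closure ?_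
      have hmem : (g * c) * c⁻¹ ∈ T ^ m * ({c⁻¹} : Set G) := Set.mul_mem_mul hmT rfl
      simpa using hmem
    -- disjointify
    set D : ℕ → Set G := disjointed (fun n => Bfun (idx n)) with hD_def
    have hDm : ∀ n, MeasurableSet (D n) := MeasurableSet.disjointed fun n => hBm _
    have hDd : Pairwise (Disjoint on D) := disjoint_disjointed _
    have hDsub : ∀ n, D n ⊆ Bfun (idx n) := fun n => disjointed_subset _ _
    have hDfin : ∀ n, μ (D n) ≠ ⊤ := fun n =>
      ((measure_mono (hDsub n)).trans_lt (hBc (idx n)).measure_lt_top).ne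
    have hDU : ⋃ n, D n = W := iUnion_disjointed
    have hrestr : μ.restrict W = Measure.sum fun n => μ.restrict (D n) := by
      rw [← hDU]; exact Measure.restrict_iUnion hDd hDm
    -- apply the per-piece lemma
    have hpiece := fun n => aux_piece μ (μ.restrict t) hv hvc hu'sm (hDm n) (hDfin n)
      (hBc (idx n)) (hDsub n)
    -- STEP A : the lintegral bound
    have hJbound : ∫⁻ g, J g ∂μ ≤ Nu2 * Nv := by
      have hJind : ∫⁻ g, J g ∂μ = ∫⁻ g in W, J g ∂μ := by
        rw [← lintegral_indicator hWm]
        refine lintegral_congr fun g => ?_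
        by_cases hg : g ∈ W
        · rw [Set.indicator_of_mem hg]
        · rw [Set.indicator_of_notMem hg, (hcov g hg).1]
      set w : ℕ → G → ℝ≥0∞ := fun n y => ∫⁻ g in D n, h (g * y) ∂μ with hw_def
      have hwm : ∀ n, Measurable (w n) := fun n => (hpiece n).2.1
      have hsw : ∀ n, ∫⁻ g in D n, J g ∂μ = ∫⁻ y, f y ^ 2 * w n y ∂(μ.restrict t) :=
        fun n => (hpiece n).2.2
      calc ∫⁻ g, J g ∂μ = ∫⁻ g in W, J g ∂μ := hJind
        _ = ∑' n, ∫⁻ g in D n, J g ∂μ := by rw [hrestr, lintegral_sum_measure]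
        _ = ∑' n, ∫⁻ y, f y ^ 2 * w n y ∂(μ.restrict t) := by
            exact tsum_congr hsw
        _ = ∫⁻ y, ∑' n, f y ^ 2 * w n y ∂(μ.restrict t) := by
            refine (lintegral_tsum fun n => ?_).symm
            exact ((hfm.pow_const 2).mul (hwm n)).aemeasurable
        _ = ∫⁻ y, f y ^ 2 * ∑' n, w n y ∂(μ.restrict t) := by
            refine lintegral_congr fun y => ?_
            exact ENNReal.tsum_mul_left
        _ ≤ ∫⁻ y, f y ^ 2 * Nv ∂(μ.restrict t) := by
            refine lintegral_mono fun y => ?_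
            refine mul_le_mul_right ?_ _
            have : ∑' n, w n y = ∫⁻ g in W, h (g * y) ∂μ := by
              rw [hrestr, lintegral_sum_measure]
            rw [this]
            calc ∫⁻ g in W, h (g * y) ∂μ ≤ ∫⁻ g, h (g * y) ∂μ :=
                  lintegral_mono' Measure.restrict_le_self le_rfl
              _ = Nv := lintegral_mul_right_eq_self h y
        _ = Nv * ∫⁻ y, f y ^ 2 ∂(μ.restrict t) := by
            rw [← lintegral_const_mul' Nv _ hNvne]
            exact lintegral_congr fun y => mul_comm _ _
        _ ≤ Nv * Nu2 := by
            refine mul_le_mul_right ?_ _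
            exact lintegral_mono' Measure.restrict_le_self le_rfl
        _ = Nu2 * Nv := mul_comm _ _
    -- STEP B : full lintegral bound for F
    have hkey : ∫⁻ g, (‖F g‖₊ : ℝ≥0∞) ^ 2 ∂μ ≤ Nu2 * Nv ^ 2 := by
      calc ∫⁻ g, (‖F g‖₊ : ℝ≥0∞) ^ 2 ∂μ ≤ ∫⁻ g, J g * Nv ∂μ := lintegral_mono hpoint
        _ = ∫⁻ g, Nv * J g ∂μ := lintegral_congr fun g => mul_comm _ _
        _ = Nv * ∫⁻ g, J g ∂μ := lintegral_const_mul' Nv J hNvne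
        _ ≤ Nv * (Nu2 * Nv) := mul_le_mul_right hJbound _
        _ = Nu2 * Nv ^ 2 := by ring
    -- STEP C : strong measurability of F
    have hFsm : StronglyMeasurable F := by
      have hgm : ∀ n : ℕ, ∃ gm : G → ℂ, StronglyMeasurable gm ∧ ∀ g ∈ D n, gm g = F g := by
        intro n
        obtain ⟨gm, hgm1, hgm2⟩ := (hpiece n).1
        exact ⟨gm, hgm1, fun g hg => by rw [hgm2 g hg, hFrep g]⟩
      choose gm hgm1 hgm2 using hgm
      set Sm : ℕ → G → ℂ := fun m g => ∑ n ∈ Finset.range m, (D n).indicator (gm n) g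
        with hSm_def
      have hSmsm : ∀ m, StronglyMeasurable (Sm m) := by
        intro m
        refine Finset.stronglyMeasurable_fun_sum _ fun n _ => ?_
        exact (hgm1 n).indicator (hDm n)
      have htend : ∀ g : G, Filter.Tendsto (fun m => Sm m g) Filter.atTop (nhds (F g)) := by
        intro g
        by_cases hg : g ∈ W
        · rw [← hDU] at hg
          obtain ⟨n0, hn0⟩ := Set.mem_iUnion.mp hg
          refine tendsto_atTop_of_eventually_const (i₀ := n0 + 1) fun m hm => ?_
          have : ∀ n, n ≠ n0 → (D n).indicator (gm n) g = 0 := by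
            intro n hn
            refine Set.indicator_of_notMem ?_ _
            intro hgn
            exact (hDd hn).ne_of_mem hgn hn0 rfl
          show (∑ n ∈ Finset.range m, (D n).indicator (gm n) g) = F g
          rw [Finset.sum_eq_single n0]
          · rw [Set.indicator_of_mem hn0, hgm2 n0 g hn0]
          · intro n _ hn
            exact this n hn
          · intro hn0m
            exact absurd (Finset.mem_range.mpr (Nat.lt_of_succ_le hm)) hn0m
        · refine tendsto_atTop_of_eventually_const (i₀ := 0) fun m _ => ?_
          show (∑ n ∈ Finset.range m, (D n).indicator (gm n) g) = F g
          rw [(hcov g hg).2]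
          refine Finset.sum_eq_zero fun n _ => ?_
          refine Set.indicator_of_notMem ?_ _
          intro hgn
          exact hg (hDU ▸ Set.mem_iUnion.mpr ⟨n, hgn⟩)
      refine stronglyMeasurable_of_tendsto Filter.atTop hSmsm ?_
      rw [tendsto_pi_nhds]
      exact htend
    -- conclusion
    have hsnormF : eLpNorm F 2 μ ≠ ⊤ := by
      rw [eLpNorm_eq_lintegral_rpow_enorm_toReal two_ne_zero ENNReal.ofNat_ne_top]
      refine (ENNReal.rpow_lt_top_of_nonneg (by norm_num) ?_).ne
      have : ∫⁻ g, (‖F g‖₊ : ℝ≥0∞) ^ ((2 : ℝ≥0∞).toReal) ∂μ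
          = ∫⁻ g, (‖F g‖₊ : ℝ≥0∞) ^ 2 ∂μ := by
        refine lintegral_congr fun g => ?_
        rw [← ENNReal.rpow_natCast]
        norm_num
      erw [this]
      exact (hkey.trans_lt (by
        refine ENNReal.mul_lt_top ?_ ?_
        · exact hNu2ne.lt_top
        · exact (ENNReal.pow_ne_top hNvne).lt_top)).ne
    have hmem : MemLp F 2 μ := ⟨hFsm.aestronglyMeasurable, hsnormF.lt_top⟩
    refine ⟨hmem, ?_⟩
    show ∫ g, ‖F g‖ ^ 2 ∂μ ≤ _
    have hint : ∫ g, ‖F g‖ ^ 2 ∂μ = (∫⁻ g, (‖F g‖₊ : ℝ≥0∞) ^ 2 ∂μ).toReal := by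
      have hsm2 : AEStronglyMeasurable (fun g => ‖F g‖ ^ 2) μ :=
        ((continuous_pow 2).comp_stronglyMeasurable hFsm.norm).aestronglyMeasurable
      have h0 : 0 ≤ᵐ[μ] fun g => ‖F g‖ ^ 2 :=
        Filter.Eventually.of_forall fun g => pow_nonneg (norm_nonneg _) 2
      have := integral_eq_lintegral_of_nonneg_ae h0 hsm2
      rw [this]
      congr 1
      refine lintegral_congr fun g => ?_
      rw [ENNReal.ofReal_pow (norm_nonneg _), ofReal_norm, enorm_eq_nnnorm]
    calc ∫ g, ‖F g‖ ^ 2 ∂μ = (∫⁻ g, (‖F g‖₊ : ℝ≥0∞) ^ 2 ∂μ).toReal := hint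
      _ ≤ (Nu2 * Nv ^ 2).toReal := by
          refine ENNReal.toReal_mono ?_ hkey
          exact ENNReal.mul_ne_top hNu2ne (ENNReal.pow_ne_top hNvne)
      _ = (eLpNorm u 2 μ).toReal ^ 2 * (eLpNorm v 1 μ).toReal ^ 2 := by
          rw [hNu2eq, hNveq, ENNReal.toReal_mul, ENNReal.toReal_pow, ENNReal.toReal_pow]
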